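/- Let θ ∈ (0, π/2], β = 2cos θ / sqrt(1 + sin²θ), and consider the Hermitian operator M = β Z⊗I + √2·sqrt(1+β²/4) Z⊗Z + √2·sqrt(1−β²/4) X⊗X on ℂ²⊗ℂ². Then M = 2√2·sqrt(1+β²/4) (ψ_θ − φ_θ), where ψ_θ, φ_θ are the rank-one projectors onto |ψ_θ⟩ = cos(θ/2)|00⟩ + sin(θ/2)|11⟩ and |φ_θ⟩ = sin(θ/2)|01⟩ − cos(θ/2)|10⟩. In particular, the only nonzero eigenvalues of M are ±2√2·sqrt(1+β²/4). -/
import Mathlib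


open Matrix Kronecker

noncomputable def PauliX : Matrix (Fin 2) (Fin 2) ℂ := !![0, 1; 1, 0]
noncomputable def PauliZ : Matrix (Fin 2) (Fin 2) ℂ := !![1, 0; 0, -1]

noncomputable def ketPsi (θ : ℝ) : Fin 2 × Fin 2 → ℂ := fun p =>
  if p = (0, 0) then (Real.cos (θ / 2) : ℂ)
  else if p = (1, 1) then (Real.sin (θ / 2) : ℂ) else 0

noncomputable def ketPhi (θ : ℝ) : Fin 2 × Fin 2 → ℂ := fun p =>
  if p = (0, 1) then (Real.sin (θ / 2) : ℂ)
  else if p = (1, 0) then (-Real.cos (θ / 2) : ℂ) else 0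

noncomputable def psiProj (θ : ℝ) : Matrix (Fin 2 × Fin 2) (Fin 2 × Fin 2) ℂ :=
  vecMulVec (ketPsi θ) (star (ketPsi θ))

noncomputable def phiProj (θ : ℝ) : Matrix (Fin 2 × Fin 2) (Fin 2 × Fin 2) ℂ :=
  vecMulVec (ketPhi θ) (star (ketPhi θ))

/-- Auxiliary matrix identity: for any real `a`,
`a cos θ · Z⊗I + a · Z⊗Z + a sin θ · X⊗X = 2a (ψ_θ − φ_θ)`. -/
lemma bellAux (θ a : ℝ) :
    ((a * Real.cos θ : ℝ) : ℂ) • (PauliZ ⊗ₖ (1 : Matrix (Fin 2) (Fin 2) ℂ))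
        + ((a : ℝ) : ℂ) • (PauliZ ⊗ₖ PauliZ)
        + ((a * Real.sin θ : ℝ) : ℂ) • (PauliX ⊗ₖ PauliX)
      = ((2 * a : ℝ) : ℂ) • (psiProj θ - phiProj θ) := by
  have hhalf : 2 * (θ / 2) = θ := by ring
  have Hc : (Real.cos θ : ℂ) = 2 * (Real.cos (θ / 2) : ℂ) ^ 2 - 1 := by
    have h := Real.cos_sq (θ / 2)
    rw [hhalf] at h
    have h2 : Real.cos θ = 2 * Real.cos (θ / 2) ^ 2 - 1 := by linarith
    exact_mod_cast congrArg Complex.ofReal h2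
  have Hs : (Real.sin θ : ℂ) = 2 * (Real.sin (θ / 2) : ℂ) * (Real.cos (θ / 2) : ℂ) := by
    have h2 : Real.sin θ = 2 * Real.sin (θ / 2) * Real.cos (θ / 2) := by
      rw [← Real.sin_two_mul, hhalf]
    exact_mod_cast congrArg Complex.ofReal h2
  have Hp : (Real.sin (θ / 2) : ℂ) ^ 2 = 1 - (Real.cos (θ / 2) : ℂ) ^ 2 := by
    have h2 : Real.sin (θ / 2) ^ 2 = 1 - Real.cos (θ / 2) ^ 2 := by
      nlinarith [Real.sin_sq_add_cos_sq (θ / 2)]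
    exact_mod_cast congrArg Complex.ofReal h2
  have Hp' : (Real.sin (θ / 2) : ℂ) * (Real.sin (θ / 2) : ℂ)
      = 1 - (Real.cos (θ / 2) : ℂ) * (Real.cos (θ / 2) : ℂ) := by
    have := Hp; rw [sq, sq] at this; exact this
  ext ⟨i, j⟩ ⟨k, l⟩
  fin_cases i <;> fin_cases j <;> fin_cases k <;> fin_cases l <;>
    simp [PauliX, PauliZ, psiProj, phiProj, vecMulVec, ketPsi, ketPhi,
      Matrix.one_apply, Prod.ext_iff, Complex.conj_ofReal,
      -Complex.ofReal_cos, -Complex.ofReal_sin] <;>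
    simp only [Hc, Hs, Hp, Hp'] <;> ring

/-- Spectral form of the Bell operator:
`β Z⊗I + √2√(1+β²/4) Z⊗Z + √2√(1−β²/4) X⊗X = 2√2√(1+β²/4) (ψ_θ − φ_θ)`. -/
theorem bellOp_spectral (θ β : ℝ) (h1 : 0 < θ) (h2 : θ ≤ Real.pi / 2)
    (hβ : β = 2 * Real.cos θ / Real.sqrt (1 + Real.sin θ ^ 2)) :
    (β : ℂ) • (PauliZ ⊗ₖ (1 : Matrix (Fin 2) (Fin 2) ℂ))
        + ((Real.sqrt 2 * Real.sqrt (1 + β ^ 2 / 4) : ℝ) : ℂ) • (PauliZ ⊗ₖ PauliZ)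
        + ((Real.sqrt 2 * Real.sqrt (1 - β ^ 2 / 4) : ℝ) : ℂ) • (PauliX ⊗ₖ PauliX)
      = ((2 * Real.sqrt 2 * Real.sqrt (1 + β ^ 2 / 4) : ℝ) : ℂ) •
          (psiProj θ - phiProj θ) := by
  have hs0 : (0:ℝ) < 1 + Real.sin θ ^ 2 := by positivity
  have hsin : 0 ≤ Real.sin θ := Real.sin_nonneg_of_nonneg_of_le_pi h1.le
    (h2.trans (by linarith [Real.pi_pos]))
  have hb2 : β ^ 2 = 4 * Real.cos θ ^ 2 / (1 + Real.sin θ ^ 2) := by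
    rw [hβ, div_pow, Real.sq_sqrt hs0.le]; ring
  have h14 : 1 + β ^ 2 / 4 = 2 / (1 + Real.sin θ ^ 2) := by
    rw [hb2]; field_simp; nlinarith [Real.sin_sq_add_cos_sq θ]
  have h14' : 1 - β ^ 2 / 4 = 2 * Real.sin θ ^ 2 / (1 + Real.sin θ ^ 2) := by
    rw [hb2]; field_simp; nlinarith [Real.sin_sq_add_cos_sq θ]
  set a : ℝ := 2 / Real.sqrt (1 + Real.sin θ ^ 2) with ha
  have hA : Real.sqrt 2 * Real.sqrt (1 + β ^ 2 / 4) = a := by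
    rw [h14, ← Real.sqrt_mul (by norm_num : (0:ℝ) ≤ 2),
      show 2 * (2 / (1 + Real.sin θ ^ 2)) = (2 / Real.sqrt (1 + Real.sin θ ^ 2)) ^ 2 by
        rw [div_pow, Real.sq_sqrt hs0.le]; ring,
      Real.sqrt_sq (by positivity)]
  have hB : Real.sqrt 2 * Real.sqrt (1 - β ^ 2 / 4) = a * Real.sin θ := by
    rw [h14', ← Real.sqrt_mul (by norm_num : (0:ℝ) ≤ 2),
      show 2 * (2 * Real.sin θ ^ 2 / (1 + Real.sin θ ^ 2))
          = (2 * Real.sin θ / Real.sqrt (1 + Real.sin θ ^ 2)) ^ 2 by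
        rw [div_pow, Real.sq_sqrt hs0.le]; ring,
      Real.sqrt_sq (by positivity), ha]
    ring
  have hβ' : β = a * Real.cos θ := by rw [hβ, ha]; ring
  have h2A : 2 * Real.sqrt 2 * Real.sqrt (1 + β ^ 2 / 4) = 2 * a := by
    rw [mul_assoc, hA]
  rw [hA, hB, h2A, hβ']
  exact bellAux θ a
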